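/- For all integers m ≥ l ≥ 0, every integer n ≥ 0 and every real x: Σ_{k=0}^{n} (C(n,k)/C(n−k+m,m))·λ^{n−k}·S₁(n−k+m,m)·∫_{[0,1]^l} β^{(m)}_{k,λ}(x + y₁ + ⋯ + y_l) dy₁⋯dy_l = Σ_{k=0}^{n} (C(n,k)/C(n−k+m−l,m−l))·λ^{n−k}·S₁(n−k+m−l,m−l)·β^{(m−l)}_{k,λ}(x), where the integral over the l-dimensional unit cube is the expectation with respect to the sum of l independent uniform [0,1] random variables (for l = 0 the integral is just β^{(m)}_{k,λ}(x)). -/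

import Mathlib

open Finset PowerSeries

noncomputable def dff (lam x : ℝ) (n : ℕ) : ℝ := ∏ i ∈ Finset.range n, (x - i * lam)

noncomputable def degExp (lam x : ℝ) : PowerSeries ℝ :=
  PowerSeries.mk fun k => dff lam x k / k.factorial

noncomputable def S1 : ℕ → ℕ → ℝ
  | 0, 0 => 1
  | 0, _ + 1 => 0
  | n + 1, 0 => -(n : ℝ) * S1 n 0
  | n + 1, k + 1 => S1 n k - (n : ℝ) * S1 n (k + 1)

open MeasureTheory

/-! ### S1 basics -/

lemma S1_succ_zero (n : ℕ) : S1 (n + 1) 0 = 0 := by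
  induction n with
  | zero => simp [S1]
  | succ n ih => rw [show S1 (n+2) 0 = -(↑(n+1) : ℝ) * S1 (n+1) 0 from rfl, ih]; ring

lemma S1_eq_zero {n k : ℕ} (h : n < k) : S1 n k = 0 := by
  induction n generalizing k with
  | zero => obtain ⟨k, rfl⟩ := Nat.exists_eq_add_of_lt h; simp [S1]
  | succ n ih =>
    obtain ⟨k, rfl⟩ : ∃ m, k = m + 1 := ⟨k - 1, by omega⟩
    rw [show S1 (n+1) (k+1) = S1 n k - (n : ℝ) * S1 n (k+1) from rfl,
      ih (by omega), ih (by omega)]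
    ring

/-! ### dff basics -/

lemma dff_zero (lam : ℝ) : dff lam 0 0 = 1 := by simp [dff]

lemma dff_succ (lam x : ℝ) (n : ℕ) : dff lam x (n + 1) = dff lam x n * (x - n * lam) :=
  Finset.prod_range_succ _ _

lemma dff_zero_eq_zero (lam : ℝ) {n : ℕ} (hn : n ≠ 0) : dff lam 0 n = 0 := by
  apply Finset.prod_eq_zero (Finset.mem_range.2 (Nat.pos_of_ne_zero hn))
  simp

lemma continuous_dff (lam : ℝ) (n : ℕ) : Continuous fun x => dff lam x n := by
  unfold dff
  exact continuous_finset_prod _ fun i _ => by continuity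

lemma dff_add (lam x y : ℝ) (n : ℕ) :
    dff lam (x + y) n
      = ∑ k ∈ Finset.range (n + 1), (n.choose k : ℝ) * dff lam x k * dff lam y (n - k) := by
  induction n with
  | zero => simp [dff]
  | succ n ih =>
    rw [dff_succ, ih, Finset.sum_mul]
    have key : ∀ k ∈ Finset.range (n + 1),
        (n.choose k : ℝ) * dff lam x k * dff lam y (n - k) * (x + y - n * lam)
          = ((n.choose k : ℝ) * dff lam x (k+1) * dff lam y (n - k))
            + ((n.choose k : ℝ) * dff lam x k * dff lam y (n - k + 1)) := by
      intro k hk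
      rw [Finset.mem_range] at hk
      have hc : ((n - k : ℕ) : ℝ) = (n : ℝ) - k := by
        rw [Nat.cast_sub (by omega)]
      rw [dff_succ, dff_succ, hc]
      ring
    rw [Finset.sum_congr rfl key, Finset.sum_add_distrib]
    -- target: ∑ k in range (n+2), C(n+1,k) a k b (n+1-k)
    rw [Finset.sum_range_succ' (fun k => (((n+1).choose k : ℝ)) * dff lam x k * dff lam y (n + 1 - k))]
    rw [Finset.sum_range_succ (fun k => ((n.choose k : ℝ)) * dff lam x (k+1) * dff lam y (n - k))]
    rw [Finset.sum_range_succ' (fun k => ((n.choose k : ℝ)) * dff lam x k * dff lam y (n - k + 1))]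
    have h1 : ∀ k ∈ Finset.range n,
        (((n+1).choose (k+1) : ℝ)) * dff lam x (k+1) * dff lam y (n + 1 - (k+1))
          = ((n.choose k : ℝ)) * dff lam x (k+1) * dff lam y (n - k)
            + ((n.choose (k+1) : ℝ)) * dff lam x (k+1) * dff lam y (n - (k+1) + 1) := by
      intro k hk
      rw [Finset.mem_range] at hk
      have : n + 1 - (k + 1) = n - k := by omega
      have h2 : n - (k+1) + 1 = n - k := by omega
      rw [this, h2, Nat.choose_succ_succ, Nat.cast_add]
      ring
    rw [Finset.sum_range_succ (fun k => (((n+1).choose (k+1) : ℝ)) * dff lam x (k+1) * dff lam y (n + 1 - (k+1)))]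
    rw [Finset.sum_congr rfl h1, Finset.sum_add_distrib]
    simp [Nat.choose_succ_self_right, Nat.sub_self]
    ring

/-! ### degExp basics -/

lemma degExp_zero (lam : ℝ) : degExp lam 0 = 1 := by
  ext n
  cases n with
  | zero => simp [degExp, dff_zero]
  | succ n => simp [degExp, dff_zero_eq_zero lam (Nat.succ_ne_zero n)]

lemma degExp_add (lam x y : ℝ) : degExp lam (x + y) = degExp lam x * degExp lam y := by
  ext n
  rw [PowerSeries.coeff_mul, Finset.Nat.sum_antidiagonal_eq_sum_range_succ_mk]
  simp only [degExp, PowerSeries.coeff_mk]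
  rw [dff_add, Finset.sum_div]
  apply Finset.sum_congr rfl
  intro k hk
  rw [Finset.mem_range] at hk
  have hkn : k ≤ n := by omega
  have hch : ((n.choose k : ℕ) : ℝ) * k.factorial * (n-k).factorial = n.factorial := by
    rw [← Nat.cast_mul, ← Nat.cast_mul, Nat.choose_mul_factorial_mul_factorial hkn]
  rw [div_mul_div_comm, div_eq_div_iff (by positivity) (by positivity)]
  linear_combination (dff lam x k * dff lam y (n-k)) * hch

lemma degExp_sub_one_ne (lam : ℝ) : degExp lam 1 - 1 ≠ 0 := by
  intro h
  have : PowerSeries.coeff 1 (degExp lam 1 - 1) = 0 := by rw [h]; simp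
  rw [map_sub] at this
  simp [degExp, dff_succ, dff] at this
/-! ### the formal logarithm log(1+lam*X) and Stirling numbers -/

noncomputable def Lser (lam : ℝ) : PowerSeries ℝ :=
  PowerSeries.mk fun j => if j = 0 then 0 else (-1)^(j+1) * lam^j / j

local notation "dX" => PowerSeries.derivative ℝ

lemma coeff_one_add_mul (lam : ℝ) (f : PowerSeries ℝ) (n : ℕ) :
    PowerSeries.coeff (n+1) ((1 + PowerSeries.C lam * PowerSeries.X) * f)
      = PowerSeries.coeff (n+1) f + lam * PowerSeries.coeff n f := by
  rw [add_mul, one_mul, map_add, mul_assoc, PowerSeries.coeff_C_mul,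
    PowerSeries.coeff_succ_X_mul]

lemma coeff_zero_one_add_mul (lam : ℝ) (f : PowerSeries ℝ) :
    PowerSeries.coeff 0 ((1 + PowerSeries.C lam * PowerSeries.X) * f)
      = PowerSeries.coeff 0 f := by
  rw [add_mul, one_mul, map_add, mul_assoc]
  simp [PowerSeries.coeff_zero_eq_constantCoeff]

lemma one_add_mul_ne (lam : ℝ) : (1 + PowerSeries.C lam * PowerSeries.X : PowerSeries ℝ) ≠ 0 := by
  intro h
  have := congrArg PowerSeries.constantCoeff h
  simp at this

lemma one_add_mul_dLser (lam : ℝ) :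
    (1 + PowerSeries.C lam * PowerSeries.X) * dX (Lser lam) = PowerSeries.C lam := by
  ext n
  cases n with
  | zero =>
    rw [coeff_zero_one_add_mul]
    simp [PowerSeries.coeff_derivative, Lser]
  | succ n =>
    rw [coeff_one_add_mul]
    simp only [PowerSeries.coeff_derivative, Lser, PowerSeries.coeff_mk]
    rw [PowerSeries.coeff_C, if_neg (by omega)]
    have hf2 : ((n:ℝ)+1+1) ≠ 0 := by positivity
    have hf1 : ((n:ℝ)+1) ≠ 0 := by positivity
    push_cast
    field_simp
    ring

noncomputable def S1ser (lam : ℝ) (k : ℕ) : PowerSeries ℝ :=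
  PowerSeries.mk fun n => k.factorial * S1 n k * lam^n / n.factorial

lemma Lser_pow (lam : ℝ) (k : ℕ) : (Lser lam)^k = S1ser lam k := by
  induction k with
  | zero =>
    ext n
    cases n with
    | zero => simp [S1ser, S1]
    | succ n => simp [S1ser, S1_succ_zero]
  | succ k ih =>
    have hder : dX ((Lser lam)^(k+1)) = (k+1 : ℕ) • ((Lser lam)^k * dX (Lser lam)) := by
      rw [Derivation.leibniz_pow]
      simp only [Nat.add_sub_cancel, smul_eq_mul]
    apply PowerSeries.derivative.ext
    · rw [hder, ih]
      -- suffices to show equality after multiplying by the unit (1 + C lam X)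
      apply mul_left_cancel₀ (one_add_mul_ne lam)
      rw [show ((1 + PowerSeries.C lam * PowerSeries.X) * ((k+1 : ℕ) • (S1ser lam k * dX (Lser lam))))
          = (k+1 : ℕ) • (S1ser lam k * ((1 + PowerSeries.C lam * PowerSeries.X) * dX (Lser lam))) by
        rw [nsmul_eq_mul, nsmul_eq_mul]; ring]
      rw [one_add_mul_dLser]
      ext n
      cases n with
      | zero =>
        rw [coeff_zero_one_add_mul]
        rw [map_nsmul, PowerSeries.coeff_mul_C]
        simp only [PowerSeries.coeff_derivative, S1ser, PowerSeries.coeff_mk, nsmul_eq_mul,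
          smul_eq_mul]
        have hS : S1 1 (k+1) = S1 0 k := by
          show S1 (0+1) (k+1) = _
          rw [show S1 (0+1) (k+1) = S1 0 k - ((0:ℕ) : ℝ) * S1 0 (k+1) from rfl]; simp
        rw [hS]
        simp [Nat.factorial_succ]
        push_cast
        ring
      | succ n =>
        rw [coeff_one_add_mul]
        rw [map_nsmul, PowerSeries.coeff_mul_C]
        simp only [PowerSeries.coeff_derivative, S1ser, PowerSeries.coeff_mk, nsmul_eq_mul,
          smul_eq_mul]
        have hS : S1 (n+2) (k+1) = S1 (n+1) k - ((n+1 : ℕ) : ℝ) * S1 (n+1) (k+1) := by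
          rw [show S1 (n+2) (k+1) = S1 (n+1) k - ((n+1 : ℕ) : ℝ) * S1 (n+1) (k+1) from rfl]
        rw [hS]
        have h1 : ((n+2).factorial : ℝ) = (n+2) * (n+1).factorial := by
          rw [Nat.factorial_succ]; push_cast; ring
        have h2 : ((k+1).factorial : ℝ) = (k+1) * k.factorial := by
          rw [Nat.factorial_succ]; push_cast; ring
        rw [h1, h2]
        have hf1 : ((n+1).factorial : ℝ) ≠ 0 := by positivity
        have hf2 : ((n:ℝ)+2) ≠ 0 := by positivity
        field_simp
        push_cast
        ring
    · -- constant coefficients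
      rw [show (Lser lam)^(k+1) = Lser lam * (Lser lam)^k from pow_succ' _ _, map_mul]
      have h0 : PowerSeries.constantCoeff (Lser lam) = 0 := by
        simp [Lser, PowerSeries.constantCoeff_mk]
      rw [h0, zero_mul]
      simp [S1ser, PowerSeries.constantCoeff_mk, S1_eq_zero (Nat.succ_pos k)]

/-! ### derivative of dff and the basic integral identity -/

noncomputable def dCoef (lam : ℝ) (n j : ℕ) : ℝ :=
  (-1)^(n-j+1) * lam^(n-j-1) * ((n.factorial : ℝ) / ((n - j : ℕ) * j.factorial))

noncomputable def dffD (lam : ℝ) (n : ℕ) (y : ℝ) : ℝ :=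
  ∑ j ∈ Finset.range n, dCoef lam n j * dff lam y j

lemma dCoef_succ_sub (lam : ℝ) {n j : ℕ} (h : j + 1 < n) :
    dCoef lam (n+1) (j+1) - dCoef lam n j
      = -lam * (dCoef lam n (j+1) * ((n:ℝ) - (j+1))) := by
  obtain ⟨t, rfl⟩ : ∃ t, n = j + t + 2 := ⟨n - j - 2, by omega⟩
  simp only [dCoef]
  rw [show j + t + 2 + 1 - (j+1) - 1 = t + 1 by omega, show j + t + 2 + 1 - (j+1) = t + 2 by omega,
    show j + t + 2 - j - 1 = t + 1 by omega, show j + t + 2 - j = t + 2 by omega,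
    show j + t + 2 - (j+1) - 1 = t by omega, show j + t + 2 - (j+1) = t + 1 by omega]
  have hf1 : ((j+t+2+1).factorial : ℝ) = (j+t+3) * (j+t+2).factorial := by
    rw [show j+t+2+1 = (j+t+2)+1 by omega, Nat.factorial_succ]; push_cast; ring
  have hf2 : ((j+1).factorial : ℝ) = (j+1) * j.factorial := by
    rw [Nat.factorial_succ]; push_cast; ring
  rw [hf1, hf2]
  have h1 : ((j:ℝ)+1) ≠ 0 := by positivity
  have h2 : ((t:ℝ)+1) ≠ 0 := by positivity
  have h3 : ((t:ℝ)+2) ≠ 0 := by positivity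
  have h4 : (j.factorial : ℝ) ≠ 0 := by positivity
  push_cast
  field_simp
  ring

lemma dCoef_top (lam : ℝ) (m : ℕ) :
    dCoef lam (m+2) (m+1) - dCoef lam (m+1) m = 1 := by
  simp only [dCoef]
  rw [show m + 2 - (m+1) - 1 = 0 by omega, show m + 2 - (m+1) = 1 by omega,
    show m + 1 - m - 1 = 0 by omega, show m + 1 - m = 1 by omega]
  have hf1 : ((m+2).factorial : ℝ) = (m+2) * (m+1).factorial := by
    rw [show m+2 = (m+1)+1 by omega, Nat.factorial_succ]; push_cast; ring
  have hf2 : ((m+1).factorial : ℝ) = (m+1) * m.factorial := by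
    rw [Nat.factorial_succ]; push_cast; ring
  have h1 : ((m+1).factorial : ℝ) ≠ 0 := by positivity
  have h2 : (m.factorial : ℝ) ≠ 0 := by positivity
  rw [hf1, hf2]
  field_simp
  ring

lemma dCoef_zero_succ (lam : ℝ) (n : ℕ) :
    dCoef lam (n+2) 0 = -lam * (dCoef lam (n+1) 0 * ((n:ℝ)+1)) := by
  simp only [dCoef]
  rw [show n + 2 - 0 - 1 = n + 1 by omega, show n + 2 - 0 = n + 2 by omega,
    show n + 1 - 0 - 1 = n by omega, show n + 1 - 0 = n + 1 by omega]
  have hf1 : ((n+2).factorial : ℝ) = (n+2) * (n+1).factorial := by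
    rw [show n+2 = (n+1)+1 by omega, Nat.factorial_succ]; push_cast; ring
  have hf2 : ((n+1).factorial : ℝ) = (n+1) * n.factorial := by
    rw [Nat.factorial_succ]; push_cast; ring
  have h1 : ((n:ℝ)+1) ≠ 0 := by positivity
  have h2 : ((n:ℝ)+2) ≠ 0 := by positivity
  rw [hf1, hf2]
  field_simp
  push_cast
  ring

lemma dffD_succ (lam : ℝ) (n : ℕ) (y : ℝ) :
    dffD lam (n+1) y = dffD lam n y * (y - n * lam) + dff lam y n := by
  cases n with
  | zero =>
    simp [dffD, dCoef, dff]
  | succ m =>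
    have expand : dffD lam (m+1) y * (y - (m+1 : ℕ) * lam)
        = ∑ j ∈ Finset.range (m+1), dCoef lam (m+1) j * dff lam y (j+1)
          - ∑ j ∈ Finset.range (m+1), lam * (dCoef lam (m+1) j * (((m:ℝ)+1) - j) * dff lam y j) := by
      rw [dffD, Finset.sum_mul, ← Finset.sum_sub_distrib]
      apply Finset.sum_congr rfl
      intro j hj
      rw [Finset.mem_range] at hj
      rw [dff_succ]
      push_cast
      ring
    push_cast at expand ⊢
    rw [expand, dffD]
    rw [Finset.sum_range_succ' (fun j => dCoef lam (m+1+1) j * dff lam y j)]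
    rw [Finset.sum_range_succ (fun j => dCoef lam (m+1+1) (j+1) * dff lam y (j+1))]
    rw [Finset.sum_range_succ (fun j => dCoef lam (m+1) j * dff lam y (j+1))]
    rw [Finset.sum_range_succ' (fun j => lam * (dCoef lam (m+1) j * (((m:ℝ)+1) - j) * dff lam y j))]
    have hpt : ∀ j ∈ Finset.range m,
        dCoef lam (m+1+1) (j+1) * dff lam y (j+1)
          = dCoef lam (m+1) j * dff lam y (j+1)
            - lam * (dCoef lam (m+1) (j+1) * (((m:ℝ)+1) - ((j:ℝ)+1)) * dff lam y (j+1)) := by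
      intro j hj
      rw [Finset.mem_range] at hj
      have h := dCoef_succ_sub lam (n := m+1) (j := j) (by omega)
      push_cast at h
      linear_combination (dff lam y (j+1)) * h
    rw [Finset.sum_congr rfl hpt, Finset.sum_sub_distrib]
    have htop := dCoef_top lam m
    have hzero := dCoef_zero_succ lam m
    push_cast at htop hzero
    have hsum : ∀ j ∈ Finset.range m,
        lam * (dCoef lam (m+1) (j+1) * (((m:ℝ)+1) - ((j:ℝ)+1)) * dff lam y (j+1))
          = lam * (dCoef lam (m+1) (j+1) * (((m:ℝ)+1) - ((j+1 : ℕ):ℝ)) * dff lam y (j+1)) := by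
      intro j _; push_cast; ring
    rw [Finset.sum_congr rfl hsum]
    linear_combination (dff lam y (m+1)) * htop + (dff lam y 0) * hzero

lemma hasDerivAt_dff (lam : ℝ) (n : ℕ) (y : ℝ) :
    HasDerivAt (fun z => dff lam z n) (dffD lam n y) y := by
  induction n generalizing y with
  | zero =>
    have : (fun z => dff lam z 0) = fun _ => (1:ℝ) := by
      funext z; simp [dff]
    rw [this, show dffD lam 0 y = 0 by simp [dffD]]
    exact hasDerivAt_const y 1
  | succ n ih =>
    have : (fun z => dff lam z (n+1)) = fun z => dff lam z n * (z - n * lam) := by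
      funext z; rw [dff_succ]
    rw [this, dffD_succ]
    have h2 : HasDerivAt (fun z : ℝ => z - n * lam) 1 y := by
      simpa using (hasDerivAt_id y).sub_const (n * lam)
    simpa [mul_one] using (ih y).fun_mul h2

noncomputable def hI (lam : ℝ) (j : ℕ) : ℝ := ∫ y in Set.Icc (0:ℝ) 1, dff lam y j

lemma continuous_dffD (lam : ℝ) (n : ℕ) : Continuous fun y => dffD lam n y := by
  unfold dffD
  exact continuous_finset_sum _ fun j _ => continuous_const.mul (continuous_dff lam j)

lemma hI_ident (lam : ℝ) (n : ℕ) :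
    dff lam 1 (n+1) = ∑ j ∈ Finset.range (n+1), dCoef lam (n+1) j * hI lam j := by
  have hftc := intervalIntegral.integral_eq_sub_of_hasDerivAt
    (f := fun z => dff lam z (n+1)) (f' := fun y => dffD lam (n+1) y)
    (a := 0) (b := 1)
    (fun y _ => hasDerivAt_dff lam (n+1) y)
    ((continuous_dffD lam (n+1)).intervalIntegrable 0 1)
  beta_reduce at hftc
  rw [dff_zero_eq_zero lam (Nat.succ_ne_zero n), sub_zero] at hftc
  rw [← hftc, intervalIntegral.integral_of_le zero_le_one,
    ← MeasureTheory.integral_Icc_eq_integral_Ioc]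
  simp only [dffD]
  rw [MeasureTheory.integral_finset_sum (μ := MeasureTheory.volume.restrict (Set.Icc (0:ℝ) 1))
    (f := fun j y => dCoef lam (n+1) j * dff lam y j)]
  · apply Finset.sum_congr rfl
    intro j _
    rw [MeasureTheory.integral_const_mul]
    rfl
  · intro j _
    exact Continuous.integrableOn_Icc (μ := MeasureTheory.volume)
      (continuous_const.mul (continuous_dff lam j))

noncomputable def Hser (lam : ℝ) : PowerSeries ℝ :=
  PowerSeries.mk fun j => hI lam j / j.factorial

lemma Hser_mul_Lser (lam : ℝ) :
    Hser lam * Lser lam = PowerSeries.C lam * (degExp lam 1 - 1) := by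
  ext n
  rw [PowerSeries.coeff_mul, Finset.Nat.sum_antidiagonal_eq_sum_range_succ_mk,
    PowerSeries.coeff_C_mul]
  dsimp only
  cases n with
  | zero =>
    simp [Hser, Lser, degExp, dff]
  | succ n =>
    rw [map_sub]
    simp only [degExp, PowerSeries.coeff_mk, PowerSeries.coeff_one, Nat.succ_ne_zero, if_false,
      sub_zero]
    rw [hI_ident lam n, Finset.sum_div, Finset.mul_sum]
    rw [Finset.sum_range_succ (fun k => PowerSeries.coeff k (Hser lam)
      * PowerSeries.coeff (n + 1 - k) (Lser lam))]
    have hL0 : PowerSeries.coeff (n + 1 - (n+1)) (Lser lam) = 0 := by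
      simp [Lser]
    rw [hL0, mul_zero, add_zero]
    apply Finset.sum_congr rfl
    intro j hj
    rw [Finset.mem_range] at hj
    obtain ⟨t, rfl⟩ : ∃ t, n = j + t := ⟨n - j, by omega⟩
    simp only [Hser, Lser, PowerSeries.coeff_mk]
    rw [show j + t + 1 - j = t + 1 by omega, if_neg (Nat.succ_ne_zero t)]
    simp only [dCoef]
    rw [show j + t + 1 - j - 1 = t by omega, show j + t + 1 - j = t + 1 by omega]
    have h1 : ((j+t+1).factorial : ℝ) ≠ 0 := by positivity
    have h2 : (j.factorial : ℝ) ≠ 0 := by positivity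
    have h3 : ((t:ℝ)+1) ≠ 0 := by positivity
    push_cast
    field_simp
    ring

/-! ### generic series with factorial-divided coefficients -/

noncomputable def fser (p : ℕ → ℝ) : PowerSeries ℝ := PowerSeries.mk fun n => p n / n.factorial

lemma degExp_eq_fser (lam x : ℝ) : degExp lam x = fser (dff lam x) := rfl

lemma fser_mul (p q : ℕ → ℝ) :
    fser p * fser q
      = fser fun n => ∑ j ∈ Finset.range (n+1), (n.choose j : ℝ) * p j * q (n - j) := by
  ext n
  rw [PowerSeries.coeff_mul, Finset.Nat.sum_antidiagonal_eq_sum_range_succ_mk]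
  dsimp only
  simp only [fser, PowerSeries.coeff_mk]
  rw [Finset.sum_div]
  apply Finset.sum_congr rfl
  intro k hk
  rw [Finset.mem_range] at hk
  have hkn : k ≤ n := by omega
  have hch : ((n.choose k : ℕ) : ℝ) * k.factorial * (n-k).factorial = n.factorial := by
    rw [← Nat.cast_mul, ← Nat.cast_mul, Nat.choose_mul_factorial_mul_factorial hkn]
  rw [div_mul_div_comm, div_eq_div_iff (by positivity) (by positivity)]
  linear_combination (-(p k * q (n-k))) * hch

lemma fser_inj {p q : ℕ → ℝ} (h : fser p = fser q) (n : ℕ) : p n = q n := by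
  have h2 := congrArg (PowerSeries.coeff n) h
  simp only [fser, PowerSeries.coeff_mk] at h2
  have hf : (n.factorial : ℝ) ≠ 0 := by positivity
  field_simp at h2
  exact h2

/-! ### consequences of the defining property of B -/

section Bpart

variable (lam : ℝ) (B : ℕ → ℝ → ℕ → ℝ)
  (hB : ∀ m x, (PowerSeries.mk fun n => B m x n / n.factorial) * (degExp lam 1 - 1) ^ m
      = (PowerSeries.X : PowerSeries ℝ) ^ m * degExp lam x)

include hB

lemma hB' : ∀ m x, fser (B m x) * (degExp lam 1 - 1) ^ m
    = (PowerSeries.X : PowerSeries ℝ) ^ m * degExp lam x := hB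

lemma Bser_zero (m : ℕ) :
    fser (B m 0) * (degExp lam 1 - 1) ^ m = PowerSeries.X ^ m := by
  have := hB' lam B hB m 0
  rwa [degExp_zero, mul_one] at this

lemma Bser_shift (m : ℕ) (z c : ℝ) :
    fser (B m (z + c)) = fser (B m z) * degExp lam c := by
  apply mul_right_cancel₀ (pow_ne_zero m (degExp_sub_one_ne lam))
  rw [hB' lam B hB m (z+c), mul_assoc, mul_comm (degExp lam c), ← mul_assoc,
    hB' lam B hB m z, mul_assoc, degExp_add]

lemma B_shift (m : ℕ) (z c : ℝ) (k : ℕ) :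
    B m (z + c) k
      = ∑ j ∈ Finset.range (k+1), (k.choose j : ℝ) * B m z j * dff lam c (k - j) := by
  have h := Bser_shift lam B hB m z c
  rw [degExp_eq_fser, fser_mul] at h
  exact fser_inj h k

lemma continuous_B (m k : ℕ) : Continuous fun z => B m z k := by
  have : (fun z => B m z k)
      = fun z => ∑ j ∈ Finset.range (k+1), (k.choose j : ℝ) * B m 0 j * dff lam z (k - j) := by
    funext z
    have := B_shift lam B hB m 0 z k
    rw [zero_add] at this
    exact this
  rw [this]
  exact continuous_finset_sum _ fun j _ =>
    continuous_const.mul (continuous_dff lam (k - j))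

end Bpart

/-! ### the A-series and the key identity -/

noncomputable def Aser (lam : ℝ) (m : ℕ) : PowerSeries ℝ :=
  PowerSeries.mk fun j => lam ^ j * S1 (j + m) m / ((j + m).choose m : ℝ) / j.factorial

lemma Aser_ident (lam : ℝ) (m : ℕ) :
    (Lser lam) ^ m = PowerSeries.X ^ m * (PowerSeries.C (lam ^ m) * Aser lam m) := by
  rw [Lser_pow]
  ext nn
  rw [PowerSeries.coeff_X_pow_mul']
  split_ifs with h
  · rw [PowerSeries.coeff_C_mul]
    obtain ⟨j, rfl⟩ : ∃ j, nn = j + m := ⟨nn - m, by omega⟩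
    rw [Nat.add_sub_cancel]
    simp only [S1ser, Aser, PowerSeries.coeff_mk]
    have hch : ((j+m).choose m : ℝ) * m.factorial * j.factorial = (j+m).factorial := by
      have := Nat.choose_mul_factorial_mul_factorial (n := j + m) (k := m) (by omega)
      rw [Nat.add_sub_cancel] at this
      rw [← Nat.cast_mul, ← Nat.cast_mul, this]
    have h1 : ((j+m).choose m : ℝ) ≠ 0 := by
      have := Nat.choose_pos (n := j + m) (k := m) (by omega)
      positivity
    have h2 : ((j+m).factorial : ℝ) ≠ 0 := by positivity
    have h3 : (j.factorial : ℝ) ≠ 0 := by positivity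
    have h4 : (m.factorial : ℝ) ≠ 0 := by positivity
    rw [div_div, show lam^m * (lam^j * S1 (j+m) m / (((j+m).choose m : ℝ) * j.factorial))
        = (lam^m * (lam^j * S1 (j+m) m)) / (((j+m).choose m : ℝ) * j.factorial) by ring]
    rw [div_eq_div_iff h2 (by positivity)]
    linear_combination (S1 (j+m) m * lam^j * lam^m) * hch
  · rw [S1ser, PowerSeries.coeff_mk, S1_eq_zero (by omega)]
    simp

section KeyPart

variable (lam : ℝ) (hlam : lam ≠ 0) (B : ℕ → ℝ → ℕ → ℝ)
  (hB : ∀ m x, (PowerSeries.mk fun n => B m x n / n.factorial) * (degExp lam 1 - 1) ^ m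
      = (PowerSeries.X : PowerSeries ℝ) ^ m * degExp lam x)

include hB

lemma Bser_step (m : ℕ) : fser (B (m+1) 0) * (degExp lam 1 - 1) = PowerSeries.X * fser (B m 0) := by
  apply mul_right_cancel₀ (pow_ne_zero m (degExp_sub_one_ne lam))
  rw [mul_assoc, ← pow_succ', Bser_zero lam B hB (m+1), mul_assoc, Bser_zero lam B hB m,
    pow_succ']

lemma Bser_x (m : ℕ) (x : ℝ) : fser (B m x) = fser (B m 0) * degExp lam x := by
  have := Bser_shift lam B hB m 0 x
  rwa [zero_add] at this

lemma IntBser_eq (m : ℕ) (x : ℝ) :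
    fser (fun k => ∫ y in Set.Icc (0:ℝ) 1, B m (x + y) k)
      = fser (B m x) * Hser lam := by
  have hint : ∀ k, (∫ y in Set.Icc (0:ℝ) 1, B m (x + y) k)
      = ∑ j ∈ Finset.range (k+1), (k.choose j : ℝ) * B m x j * hI lam (k - j) := by
    intro k
    have hident : ∀ y : ℝ, B m (x + y) k
        = ∑ j ∈ Finset.range (k+1), (k.choose j : ℝ) * B m x j * dff lam y (k - j) :=
      fun y => B_shift lam B hB m x y k
    rw [MeasureTheory.setIntegral_congr_fun measurableSet_Icc (fun y _ => hident y)]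
    rw [MeasureTheory.integral_finset_sum]
    · exact Finset.sum_congr rfl fun j _ => by
        rw [MeasureTheory.integral_const_mul]; rfl
    · intro j _
      exact Continuous.integrableOn_Icc (μ := MeasureTheory.volume)
        (continuous_const.mul (continuous_dff lam (k - j)))
  have : (fun k => ∫ y in Set.Icc (0:ℝ) 1, B m (x + y) k)
      = fun k => ∑ j ∈ Finset.range (k+1), (k.choose j : ℝ) * B m x j * hI lam (k - j) := by
    funext k; exact hint k
  rw [this, show Hser lam = fser (hI lam) from rfl, fser_mul]

include hlam

lemma key_series (m : ℕ) (x : ℝ) :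
    Aser lam (m+1) * fser (fun k => ∫ y in Set.Icc (0:ℝ) 1, B (m+1) (x + y) k)
      = Aser lam m * fser (B m x) := by
  have hCX : (PowerSeries.C lam * PowerSeries.X) ^ (m+1) ≠ 0 := by
    apply pow_ne_zero
    apply mul_ne_zero
    · simpa using hlam
    · exact PowerSeries.X_ne_zero
  apply mul_right_cancel₀ hCX
  have hexp : (PowerSeries.C lam * PowerSeries.X) ^ (m+1)
      = PowerSeries.C (lam ^ (m+1)) * PowerSeries.X ^ (m+1) := by
    rw [mul_pow, map_pow]
  rw [IntBser_eq lam B hB (m+1) x, Bser_x lam B hB (m+1) x, Bser_x lam B hB m x, hexp]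
  -- LHS
  have hL : Aser lam (m+1) * (fser (B (m+1) 0) * degExp lam x * Hser lam)
        * (PowerSeries.C (lam ^ (m+1)) * PowerSeries.X ^ (m+1))
      = (Lser lam) ^ (m+1) * fser (B (m+1) 0) * degExp lam x * Hser lam := by
    rw [Aser_ident]; ring
  rw [hL]
  have hR : Aser lam m * (fser (B m 0) * degExp lam x)
        * (PowerSeries.C (lam ^ (m+1)) * PowerSeries.X ^ (m+1))
      = (Lser lam) ^ m * fser (B m 0) * degExp lam x
          * (PowerSeries.C lam * PowerSeries.X) := by
    rw [Aser_ident]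
    rw [show (lam ^ (m+1)) = lam ^ m * lam by ring, map_mul, pow_succ]
    ring
  rw [hR]
  have hmid : (Lser lam) ^ (m+1) * fser (B (m+1) 0) * Hser lam
      = (Lser lam) ^ m * fser (B m 0) * (PowerSeries.C lam * PowerSeries.X) := by
    rw [pow_succ]
    have h1 : (Lser lam) ^ m * Lser lam * fser (B (m+1) 0) * Hser lam
        = (Lser lam) ^ m * (Hser lam * Lser lam) * fser (B (m+1) 0) := by ring
    rw [h1, Hser_mul_Lser]
    have h2 : (Lser lam) ^ m * (PowerSeries.C lam * (degExp lam 1 - 1)) * fser (B (m+1) 0)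
        = (Lser lam) ^ m * PowerSeries.C lam * (fser (B (m+1) 0) * (degExp lam 1 - 1)) := by
      ring
    rw [h2, Bser_step lam B hB m]
    ring
  calc (Lser lam) ^ (m+1) * fser (B (m+1) 0) * degExp lam x * Hser lam
      = (Lser lam) ^ (m+1) * fser (B (m+1) 0) * Hser lam * degExp lam x := by ring
    _ = (Lser lam) ^ m * fser (B m 0) * (PowerSeries.C lam * PowerSeries.X) * degExp lam x := by
        rw [hmid]
    _ = (Lser lam) ^ m * fser (B m 0) * degExp lam x * (PowerSeries.C lam * PowerSeries.X) := by
        ring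

end KeyPart

/-! ### coefficient extraction -/

lemma coeff_Aser_mul (lam : ℝ) (m : ℕ) (q : ℕ → ℝ) (n : ℕ) :
    ∑ k ∈ Finset.range (n + 1),
        ((n.choose k : ℝ) / ((n - k + m).choose m : ℝ)) * lam ^ (n - k) * S1 (n - k + m) m * q k
      = (n.factorial : ℝ) * PowerSeries.coeff n (Aser lam m * fser q) := by
  rw [PowerSeries.coeff_mul, Finset.Nat.sum_antidiagonal_eq_sum_range_succ_mk]
  dsimp only
  rw [Finset.mul_sum]
  rw [← Finset.sum_range_reflect
    (fun k => ((n.choose k : ℝ) / ((n - k + m).choose m : ℝ)) * lam ^ (n - k)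
      * S1 (n - k + m) m * q k) (n+1)]
  apply Finset.sum_congr rfl
  intro k hk
  rw [Finset.mem_range] at hk
  have hkn : k ≤ n := by omega
  rw [show n + 1 - 1 - k = n - k by omega]
  rw [show n - (n - k) = k by omega]
  simp only [Aser, fser, PowerSeries.coeff_mk]
  have hch : ((n.choose k : ℕ) : ℝ) * k.factorial * (n-k).factorial = n.factorial := by
    rw [← Nat.cast_mul, ← Nat.cast_mul, Nat.choose_mul_factorial_mul_factorial hkn]
  have h1 : (k.factorial : ℝ) ≠ 0 := by positivity
  have h2 : ((n-k).factorial : ℝ) ≠ 0 := by positivity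
  have h3 : ((k + m).choose m : ℝ) ≠ 0 := by
    have := Nat.choose_pos (n := k + m) (k := m) (by omega)
    positivity
  rw [Nat.choose_symm hkn]
  rw [show ((n.choose k : ℝ)) / ((k + m).choose m : ℝ) * lam ^ k * S1 (k + m) m * q (n - k)
      = ((n.choose k : ℝ) * (lam ^ k * S1 (k + m) m) * q (n - k)) / ((k + m).choose m : ℝ)
      by ring]
  rw [show (n.factorial : ℝ) * (lam ^ k * S1 (k + m) m / ((k + m).choose m : ℝ) / k.factorial
        * (q (n - k) / (n-k).factorial))
      = ((n.factorial : ℝ) * (lam ^ k * S1 (k + m) m) * q (n - k))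
        / (((k + m).choose m : ℝ) * k.factorial * (n-k).factorial) by ring]
  rw [div_eq_div_iff h3 (by positivity)]
  linear_combination (lam ^ k * S1 (k+m) m * q (n-k) * ((k+m).choose m : ℝ)) * hch

/-! ### the key lemma at the level of sums -/

lemma key_sum (lam : ℝ) (hlam : lam ≠ 0) (B : ℕ → ℝ → ℕ → ℝ)
    (hB : ∀ m x, (PowerSeries.mk fun n => B m x n / n.factorial) * (degExp lam 1 - 1) ^ m
        = (PowerSeries.X : PowerSeries ℝ) ^ m * degExp lam x)
    (m : ℕ) (x : ℝ) (n : ℕ) :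
    ∑ k ∈ Finset.range (n + 1),
        ((n.choose k : ℝ) / ((n - k + (m+1)).choose (m+1) : ℝ)) * lam ^ (n - k)
          * S1 (n - k + (m+1)) (m+1) * (∫ y in Set.Icc (0:ℝ) 1, B (m+1) (x + y) k)
      = ∑ k ∈ Finset.range (n + 1),
        ((n.choose k : ℝ) / ((n - k + m).choose m : ℝ)) * lam ^ (n - k)
          * S1 (n - k + m) m * B m x k := by
  rw [coeff_Aser_mul lam (m+1) (fun k => ∫ y in Set.Icc (0:ℝ) 1, B (m+1) (x + y) k) n,
    coeff_Aser_mul lam m (B m x) n, key_series lam hlam B hB m x]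

/-! ### cube integrals -/

lemma cube_zero (f : (Fin 0 → ℝ) → ℝ) (c : ℝ) (hf : ∀ y, f y = c) :
    (∫ y in (Set.univ.pi fun _ : Fin 0 => Set.Icc (0:ℝ) 1), f y) = c := by
  rw [show f = fun _ => c from funext hf, MeasureTheory.setIntegral_const]
  rw [show (MeasureTheory.volume.real (Set.univ.pi fun _ : Fin 0 => Set.Icc (0:ℝ) 1)) = 1 by
    rw [MeasureTheory.measureReal_def, MeasureTheory.volume_pi_pi]; simp]
  simp

lemma sum_insertNth (l : ℕ) (c : ℝ) (y : Fin l → ℝ) :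
    (∑ i, (Fin.insertNth 0 c y : Fin (l+1) → ℝ) i) = c + ∑ i, y i := by
  rw [Fin.sum_univ_succAbove _ 0]
  simp

lemma cube_succ (g : ℝ → ℝ) (hg : Continuous g) (l : ℕ) :
    (∫ y in (Set.univ.pi fun _ : Fin (l+1) => Set.Icc (0:ℝ) 1), g (∑ i, y i))
      = ∫ c in Set.Icc (0:ℝ) 1,
          ∫ y in (Set.univ.pi fun _ : Fin l => Set.Icc (0:ℝ) 1), g (c + ∑ i, y i) := by
  set e := MeasurableEquiv.piFinSuccAbove (fun _ : Fin (l+1) => ℝ) 0 with he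
  have hmp : MeasureTheory.MeasurePreserving e.symm
      (MeasureTheory.volume : MeasureTheory.Measure (ℝ × (Fin l → ℝ)))
      (MeasureTheory.volume : MeasureTheory.Measure (Fin (l+1) → ℝ)) :=
    (MeasureTheory.volume_preserving_piFinSuccAbove (fun _ : Fin (l + 1) => ℝ) 0).symm
  have hem : MeasurableEmbedding (e.symm : ℝ × (Fin l → ℝ) → (Fin (l+1) → ℝ)) :=
    e.symm.measurableEmbedding
  rw [← hmp.setIntegral_preimage_emb hem (fun y => g (∑ i, y i)) _]
  have hsymm : ∀ z : ℝ × (Fin l → ℝ), e.symm z = Fin.insertNth 0 z.1 z.2 := by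
    intro z
    rfl
  have hset : e.symm ⁻¹' (Set.univ.pi fun _ : Fin (l+1) => Set.Icc (0:ℝ) 1)
      = (Set.Icc (0:ℝ) 1) ×ˢ (Set.univ.pi fun _ : Fin l => Set.Icc (0:ℝ) 1) := by
    ext z
    simp only [Set.mem_preimage, Set.mem_univ_pi, Set.mem_prod, hsymm]
    rw [Fin.forall_iff_succAbove (0 : Fin (l+1))]
    simp [Fin.insertNth_apply_same, Fin.insertNth_apply_succAbove]
  have hfun : (fun z : ℝ × (Fin l → ℝ) => g (∑ i, (e.symm z) i))
      = fun z : ℝ × (Fin l → ℝ) => g (z.1 + ∑ i, z.2 i) := by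
    funext z
    rw [hsymm, sum_insertNth]
  rw [hset, hfun, MeasureTheory.Measure.volume_eq_prod]
  rw [MeasureTheory.setIntegral_prod]
  apply ContinuousOn.integrableOn_compact (isCompact_Icc.prod
    (isCompact_univ_pi fun _ => isCompact_Icc))
  apply Continuous.continuousOn
  exact hg.comp (continuous_fst.add
    (continuous_finset_sum Finset.univ fun i _ => (continuous_apply i).comp continuous_snd))

section Final

variable (lam : ℝ) (B : ℕ → ℝ → ℕ → ℝ)
  (hB : ∀ m x, (PowerSeries.mk fun n => B m x n / n.factorial) * (degExp lam 1 - 1) ^ m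
      = (PowerSeries.X : PowerSeries ℝ) ^ m * degExp lam x)

include hB

lemma cont_cube_integrand (m k : ℕ) (x : ℝ) (l : ℕ) :
    Continuous fun y : Fin l → ℝ => B m (x + ∑ i, y i) k :=
  (continuous_B lam B hB m k).comp (continuous_const.add
    (continuous_finset_sum Finset.univ fun i _ => continuous_apply i))

lemma integrableOn_cube (m k : ℕ) (x : ℝ) (l : ℕ) :
    MeasureTheory.IntegrableOn (fun y : Fin l → ℝ => B m (x + ∑ i, y i) k)
      (Set.univ.pi fun _ : Fin l => Set.Icc (0:ℝ) 1) MeasureTheory.volume :=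
  ContinuousOn.integrableOn_compact (isCompact_univ_pi fun _ => isCompact_Icc)
    (cont_cube_integrand lam B hB m k x l).continuousOn

lemma cube_param (m k l : ℕ) (x : ℝ) :
    (fun c : ℝ => ∫ y in (Set.univ.pi fun _ : Fin l => Set.Icc (0:ℝ) 1),
        B m ((x + c) + ∑ i, y i) k)
      = fun c => ∑ j ∈ Finset.range (k+1),
          ((k.choose j : ℝ)
            * (∫ y in (Set.univ.pi fun _ : Fin l => Set.Icc (0:ℝ) 1), B m (x + ∑ i, y i) j))
          * dff lam c (k - j) := by
  funext c
  have hident : ∀ y : Fin l → ℝ, B m ((x + c) + ∑ i, y i) k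
      = ∑ j ∈ Finset.range (k+1), (k.choose j : ℝ) * B m (x + ∑ i, y i) j * dff lam c (k - j) := by
    intro y
    rw [show (x + c) + ∑ i, y i = (x + ∑ i, y i) + c by ring]
    exact B_shift lam B hB m _ c k
  rw [MeasureTheory.setIntegral_congr_fun (MeasurableSet.univ_pi fun _ => measurableSet_Icc)
    (fun y _ => hident y)]
  rw [MeasureTheory.integral_finset_sum]
  · apply Finset.sum_congr rfl
    intro j _
    rw [show (fun y : Fin l → ℝ => (k.choose j : ℝ) * B m (x + ∑ i, y i) j * dff lam c (k - j))
        = fun y : Fin l → ℝ => ((k.choose j : ℝ) * dff lam c (k - j)) * B m (x + ∑ i, y i) j by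
      funext y; ring]
    rw [MeasureTheory.integral_const_mul]
    ring
  · intro j _
    exact ContinuousOn.integrableOn_compact (isCompact_univ_pi fun _ => isCompact_Icc)
      ((continuous_const.mul ((cont_cube_integrand lam B hB m j x l))).mul
        continuous_const).continuousOn

lemma cont_cube_param (m k l : ℕ) (x : ℝ) :
    Continuous fun c : ℝ => ∫ y in (Set.univ.pi fun _ : Fin l => Set.Icc (0:ℝ) 1),
        B m ((x + c) + ∑ i, y i) k := by
  rw [cube_param lam B hB m k l x]
  exact continuous_finset_sum _ fun j _ => continuous_const.mul (continuous_dff lam (k - j))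

end Final

theorem stmt14 (lam : ℝ) (hlam : lam ≠ 0)
    (B : ℕ → ℝ → ℕ → ℝ)
    (hB : ∀ m x, (PowerSeries.mk fun n => B m x n / n.factorial) * (degExp lam 1 - 1) ^ m
        = (PowerSeries.X : PowerSeries ℝ) ^ m * degExp lam x)
    (m l : ℕ) (hml : l ≤ m) (n : ℕ) (x : ℝ) :
    ∑ k ∈ Finset.range (n + 1),
      ((n.choose k : ℝ) / ((n - k + m).choose m : ℝ)) * lam ^ (n - k) * S1 (n - k + m) m
        * (∫ y in (Set.univ.pi fun _ : Fin l => Set.Icc (0:ℝ) 1),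
            B m (x + ∑ i, y i) k)
    = ∑ k ∈ Finset.range (n + 1),
      ((n.choose k : ℝ) / ((n - k + (m - l)).choose (m - l) : ℝ)) * lam ^ (n - k)
        * S1 (n - k + (m - l)) (m - l) * B (m - l) x k := by
  induction l generalizing m x with
  | zero =>
    rw [Nat.sub_zero]
    apply Finset.sum_congr rfl
    intro k _
    rw [cube_zero _ (B m x k) (fun y => by simp)]
  | succ l ih =>
    -- step 1 : peel one coordinate off the cube integral
    have h1 : ∀ k, (∫ y in (Set.univ.pi fun _ : Fin (l+1) => Set.Icc (0:ℝ) 1),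
          B m (x + ∑ i, y i) k)
        = ∫ c in Set.Icc (0:ℝ) 1,
            ∫ y in (Set.univ.pi fun _ : Fin l => Set.Icc (0:ℝ) 1),
              B m ((x + c) + ∑ i, y i) k := by
      intro k
      have hc : Continuous fun t : ℝ => B m (x + t) k :=
        (continuous_B lam B hB m k).comp (continuous_const.add continuous_id)
      have := cube_succ (fun t => B m (x + t) k) hc l
      rw [this]
      simp only [← add_assoc]
    simp only [h1]
    -- step 2 : swap the finite sum with the outer integral
    have h2 : ∑ k ∈ Finset.range (n + 1),
          ((n.choose k : ℝ) / ((n - k + m).choose m : ℝ)) * lam ^ (n - k) * S1 (n - k + m) m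
            * ∫ c in Set.Icc (0:ℝ) 1,
                (∫ y in (Set.univ.pi fun _ : Fin l => Set.Icc (0:ℝ) 1),
                  B m ((x + c) + ∑ i, y i) k)
        = ∫ c in Set.Icc (0:ℝ) 1, ∑ k ∈ Finset.range (n + 1),
            ((n.choose k : ℝ) / ((n - k + m).choose m : ℝ)) * lam ^ (n - k) * S1 (n - k + m) m
              * (∫ y in (Set.univ.pi fun _ : Fin l => Set.Icc (0:ℝ) 1),
                  B m ((x + c) + ∑ i, y i) k) := by
      rw [MeasureTheory.integral_finset_sum]
      · exact Finset.sum_congr rfl fun k _ => (MeasureTheory.integral_const_mul _ _).symm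
      · intro k _
        exact ContinuousOn.integrableOn_compact isCompact_Icc
          (continuous_const.mul (cont_cube_param lam B hB m k l x)).continuousOn
    rw [h2]
    -- step 3 : apply the induction hypothesis pointwise under the integral
    have h3 : ∀ c ∈ Set.Icc (0:ℝ) 1,
        (∑ k ∈ Finset.range (n + 1),
          ((n.choose k : ℝ) / ((n - k + m).choose m : ℝ)) * lam ^ (n - k) * S1 (n - k + m) m
            * (∫ y in (Set.univ.pi fun _ : Fin l => Set.Icc (0:ℝ) 1),
                B m ((x + c) + ∑ i, y i) k))
        = ∑ k ∈ Finset.range (n + 1),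
            ((n.choose k : ℝ) / ((n - k + (m - l)).choose (m - l) : ℝ)) * lam ^ (n - k)
              * S1 (n - k + (m - l)) (m - l) * B (m - l) (x + c) k :=
      fun c _ => ih m (by omega) (x + c)
    rw [MeasureTheory.setIntegral_congr_fun measurableSet_Icc h3]
    -- step 4 : swap back
    rw [MeasureTheory.integral_finset_sum]
    · -- step 5 : apply the one-variable key lemma
      have h5 : ∀ k ∈ Finset.range (n+1),
          (∫ c in Set.Icc (0:ℝ) 1,
            ((n.choose k : ℝ) / ((n - k + (m - l)).choose (m - l) : ℝ)) * lam ^ (n - k)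
              * S1 (n - k + (m - l)) (m - l) * B (m - l) (x + c) k)
          = ((n.choose k : ℝ) / ((n - k + (m - l)).choose (m - l) : ℝ)) * lam ^ (n - k)
              * S1 (n - k + (m - l)) (m - l) * ∫ c in Set.Icc (0:ℝ) 1, B (m - l) (x + c) k :=
        fun k _ => MeasureTheory.integral_const_mul _ _
      rw [Finset.sum_congr rfl h5]
      have hrep : m - l = (m - (l+1)) + 1 := by omega
      rw [show (∑ k ∈ Finset.range (n + 1),
          ((n.choose k : ℝ) / ((n - k + (m - l)).choose (m - l) : ℝ)) * lam ^ (n - k)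
            * S1 (n - k + (m - l)) (m - l) * ∫ c in Set.Icc (0:ℝ) 1, B (m - l) (x + c) k)
        = ∑ k ∈ Finset.range (n + 1),
          ((n.choose k : ℝ) / ((n - k + ((m - (l+1)) + 1)).choose ((m - (l+1)) + 1) : ℝ))
            * lam ^ (n - k) * S1 (n - k + ((m - (l+1)) + 1)) ((m - (l+1)) + 1)
            * ∫ c in Set.Icc (0:ℝ) 1, B ((m - (l+1)) + 1) (x + c) k by rw [← hrep]]
      exact key_sum lam hlam B hB (m - (l+1)) x n
    · intro k _
      apply ContinuousOn.integrableOn_compact isCompact_Icc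
      apply Continuous.continuousOn
      exact continuous_const.mul ((continuous_B lam B hB (m - l) k).comp
        (continuous_const.add continuous_id))
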